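/- Let u, v, p, q, r be real numbers, all greater than 1, such that 1/u + 1/v = 1 and 1/(u(p − 1)) + 1/(v(q − 1)) = 1/(r − 1); write p' = p/(p − 1), q' = q/(q − 1), r' = r/(r − 1). Set s = 1/(p v), t = 1/(q u), and let f(x) = (p s)^{1/(2p)} e^{−s x²/2} and g(x) = (q t)^{1/(2q)} e^{−t x²/2} (so ‖f‖_{L^p(d_N)} = ‖g‖_{L^q(d_N)} = 1). Then { ∫_ℝ [ ∫_ℝ f(x − y) g(y) exp( −(1/(2 p' q' r')) ((q'/v) x − r' y)² ) d_N y ]^r d_N x }^{1/r} = ( v^{1/r − 1/p} · u^{1/r − 1/q} )^{1/2}, i.e. these Gaussians achieve equality in the one-dimensional weighted Young-type inequality with constant C = ( v^{1/r − 1/p} u^{1/r − 1/q} )^{1/2}. -/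

import Mathlib

open MeasureTheory Real

/-- The normalized Lebesgue measure `d_N x = (2π)^(−1/2) dx` on `ℝ`. -/
noncomputable def normalizedLebesgueR : Measure ℝ :=
  ENNReal.ofReal ((2 * Real.pi) ^ (-(1 : ℝ) / 2)) • (volume : Measure ℝ)

lemma gauss_integral (a b c : ℝ) (ha : 0 < a) :
    ∫ y : ℝ, Real.exp (-(a/2) * y ^ 2 + b * y + c) ∂normalizedLebesgueR
      = a ^ (-(1:ℝ)/2) * Real.exp (b ^ 2 / (2 * a) + c) := by
  rw [normalizedLebesgueR, integral_smul_measure,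
    ENNReal.toReal_ofReal (by positivity : (0:ℝ) ≤ (2 * Real.pi) ^ (-(1:ℝ)/2))]
  have h1 : ∀ y : ℝ, -(a/2) * y ^ 2 + b * y + c
      = -(a/2) * (y - b/a) ^ 2 + (b^2/(2*a) + c) := by
    intro y; field_simp; ring
  have h2 : (∫ y : ℝ, Real.exp (-(a/2) * y ^ 2 + b * y + c))
      = (∫ y : ℝ, Real.exp (-(a/2) * (y - b/a) ^ 2)) * Real.exp (b^2/(2*a) + c) := by
    rw [← integral_mul_const]
    congr 1; funext y; rw [← Real.exp_add, h1 y]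
  rw [h2]
  have h3 : (∫ y : ℝ, Real.exp (-(a/2) * (y - b/a) ^ 2))
      = ∫ y : ℝ, Real.exp (-(a/2) * y ^ 2) :=
    integral_sub_right_eq_self (fun y => Real.exp (-(a/2) * y ^ 2)) (b/a)
  rw [h3, integral_gaussian]
  have h4 : Real.sqrt (Real.pi / (a/2)) = (2*Real.pi) ^ ((1:ℝ)/2) * a ^ (-(1:ℝ)/2) := by
    rw [show Real.pi / (a/2) = (2*Real.pi)/a by ring, Real.sqrt_eq_rpow,
      Real.div_rpow (by positivity) ha.le, div_eq_mul_inv,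
      ← Real.rpow_neg ha.le]
    norm_num
  rw [h4, smul_eq_mul]
  rw [show ((2*Real.pi) ^ (-(1:ℝ)/2)) * ((2*Real.pi) ^ ((1:ℝ)/2) * a ^ (-(1:ℝ)/2) * Real.exp (b^2/(2*a)+c))
      = ((2*Real.pi) ^ (-(1:ℝ)/2) * (2*Real.pi) ^ ((1:ℝ)/2)) * (a ^ (-(1:ℝ)/2) * Real.exp (b^2/(2*a)+c)) by ring,
    ← Real.rpow_add (by positivity)]
  norm_num

theorem weighted_young_equality_case
    (u v p q r : ℝ)
    (hu : 1 < u) (hv : 1 < v) (hp : 1 < p) (hq : 1 < q) (hr : 1 < r)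
    (huv : 1 / u + 1 / v = 1)
    (hcond : 1 / (u * (p - 1)) + 1 / (v * (q - 1)) = 1 / (r - 1))
    (p' q' r' : ℝ) (hp' : p' = p / (p - 1)) (hq' : q' = q / (q - 1)) (hr' : r' = r / (r - 1))
    (s t : ℝ) (hs : s = 1 / (p * v)) (ht : t = 1 / (q * u))
    (f g : ℝ → ℝ)
    (hf : ∀ x, f x = (p * s) ^ (1 / (2 * p)) * Real.exp (-s * x ^ 2 / 2))
    (hg : ∀ x, g x = (q * t) ^ (1 / (2 * q)) * Real.exp (-t * x ^ 2 / 2)) :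
    (∫ x, (∫ y, f (x - y) * g y
          * Real.exp (-(1 / (2 * p' * q' * r')) * ((q' / v) * x - r' * y) ^ 2)
          ∂normalizedLebesgueR) ^ r ∂normalizedLebesgueR) ^ (1 / r)
    = (v ^ (1 / r - 1 / p) * u ^ (1 / r - 1 / q)) ^ ((1 : ℝ) / 2) := by
  subst hp' hq' hr' hs ht
  have hu0' : (0:ℝ) < u := by linarith
  have hv0' : (0:ℝ) < v := by linarith
  have hu0 : u ≠ 0 := ne_of_gt hu0'
  have hv0 : v ≠ 0 := ne_of_gt hv0'
  have hp0 : p ≠ 0 := by positivity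
  have hq0 : q ≠ 0 := by positivity
  have hr0 : r ≠ 0 := by positivity
  have hp1 : p - 1 ≠ 0 := by intro h; linarith
  have hq1 : q - 1 ≠ 0 := by intro h; linarith
  have hr1 : r - 1 ≠ 0 := by intro h; linarith
  have hruv : (0:ℝ) < r * u * v := by positivity
  have huvpos : (0:ℝ) < u * v := by positivity
  -- polynomial forms of the constraints
  have huv' : v + u = u * v := by field_simp at huv; linarith
  have hcond' : (v * (q - 1) + u * (p - 1)) * (r - 1) = u * (p - 1) * (v * (q - 1)) := by
    field_simp at hcond; linarith
  -- clean the weight expression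
  have hw1 : (1 / (2 * (p/(p-1)) * (q/(q-1)) * (r/(r-1))) : ℝ)
      = (p-1)*(q-1)*(r-1)/(2*p*q*r) := by
    field_simp
  have hw2 : ((q/(q-1)) / v : ℝ) = q/((q-1)*v) := div_div _ _ _
  have hw3 : (r/(r-1) : ℝ) = r * (1/(r-1)) := by ring
  simp only [hw1]
  simp only [hw2]
  simp only [hw3]
  -- the scalar identities using the constraints
  have e1 : 1/(p*v) + 1/(q*u) + (r*(p-1)*(q-1))/((r-1)*p*q) = 1 := by
    field_simp
    linear_combination ((r-1)*(p+q-1)) * huv' + (-1) * hcond'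
  have e3 : 1/(p*v) + (q*(p-1)*(r-1))/((q-1)*p*r*v^2) = 1/v^2 + 1/(r*u*v) := by
    field_simp
    linear_combination (-(q-1)*(p+r-1)) * huv' + hcond'
  -- quadratic-form coefficients
  have hstep1 : (p-1)*(q-1)*(r-1)/(p*q*r)*(r*(1/(r-1)))^2 = (r*(p-1)*(q-1))/((r-1)*p*q) := by
    field_simp
    try ring
  have hAval : 1/(p*v) + 1/(q*u) + (p-1)*(q-1)*(r-1)/(p*q*r)*(r*(1/(r-1)))^2 = 1 := by
    rw [hstep1]; exact e1
  have hBval : 1/(p*v) + (p-1)*(q-1)*(r-1)/(p*q*r)*(q/((q-1)*v))*(r*(1/(r-1))) = 1/v := by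
    field_simp
    try ring
  have hstep2 : (p-1)*(q-1)*(r-1)/(2*p*q*r)*(q/((q-1)*v))^2
      = ((q*(p-1)*(r-1))/((q-1)*p*r*v^2))/2 := by
    field_simp
    try ring
  have hCval : -(1/(p*v))/2 - (p-1)*(q-1)*(r-1)/(2*p*q*r)*(q/((q-1)*v))^2
      = -(1/(2*v^2)) - (1/(r*u*v))/2 := by
    rw [hstep2]
    have h2 := e3
    field_simp at h2 ⊢
    linarith
  -- the constant K0
  set K0 : ℝ := (p * (1/(p*v))) ^ (1 / (2 * p)) * (q * (1/(q*u))) ^ (1 / (2 * q)) with hK0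
  have hK0pos : 0 < K0 := by
    rw [hK0]
    apply mul_pos <;> apply Real.rpow_pos_of_pos <;> positivity
  -- pointwise form of the inner integrand
  have hpt : ∀ x y : ℝ, f (x - y) * g y
        * Real.exp (-((p-1)*(q-1)*(r-1)/(2*p*q*r)) * ((q/((q-1)*v)) * x - (r * (1/(r-1))) * y) ^ 2)
      = K0 * Real.exp (-((1:ℝ)/2) * y^2 + (x*(1/v)) * y + ((-(1/(2*v^2)) - (1/(r*u*v))/2)*x^2)) := by
    intro x y
    rw [hf, hg]
    rw [show ((p * (1/(p*v))) ^ (1 / (2 * p)) * Real.exp (-(1/(p*v)) * (x-y) ^ 2 / 2))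
        * ((q * (1/(q*u))) ^ (1 / (2 * q)) * Real.exp (-(1/(q*u)) * y ^ 2 / 2))
        * Real.exp (-((p-1)*(q-1)*(r-1)/(2*p*q*r)) * ((q/((q-1)*v)) * x - (r * (1/(r-1))) * y) ^ 2)
      = K0 * (Real.exp (-(1/(p*v)) * (x-y) ^ 2 / 2)
        * Real.exp (-(1/(q*u)) * y ^ 2 / 2)
        * Real.exp (-((p-1)*(q-1)*(r-1)/(2*p*q*r)) * ((q/((q-1)*v)) * x - (r * (1/(r-1))) * y) ^ 2)) by
        rw [hK0]; ring]
    rw [← Real.exp_add, ← Real.exp_add]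
    congr 1
    rw [Real.exp_eq_exp]
    linear_combination (-(y^2)/2) * hAval + (x*y) * hBval + (x^2) * hCval
  -- compute the inner integral
  have inner_eq : ∀ x : ℝ, (∫ y, f (x - y) * g y
        * Real.exp (-((p-1)*(q-1)*(r-1)/(2*p*q*r)) * ((q/((q-1)*v)) * x - (r * (1/(r-1))) * y) ^ 2)
        ∂normalizedLebesgueR)
      = K0 * Real.exp (-((1/(r*u*v))/2) * x ^ 2) := by
    intro x
    simp_rw [hpt]
    rw [MeasureTheory.integral_const_mul,
      gauss_integral 1 (x*(1/v)) ((-(1/(2*v^2)) - (1/(r*u*v))/2)*x^2) one_pos,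
      Real.one_rpow, one_mul]
    congr 1
    ring
  simp_rw [inner_eq]
  -- compute the outer integral
  have hpow : ∀ x : ℝ, (K0 * Real.exp (-((1/(r*u*v))/2) * x ^ 2)) ^ r
      = K0 ^ r * Real.exp (-((1/(u*v))/2) * x ^ 2 + 0 * x + 0) := by
    intro x
    rw [Real.mul_rpow hK0pos.le (Real.exp_pos _).le,
      Real.rpow_def_of_pos (Real.exp_pos _), Real.log_exp]
    congr 1
    field_simp
    ring
  simp_rw [hpow]
  rw [MeasureTheory.integral_const_mul,
    gauss_integral (1/(u*v)) 0 0 (by positivity)]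
  rw [show ((0:ℝ) ^ 2 / (2 * (1/(u*v))) + 0 : ℝ) = 0 by norm_num, Real.exp_zero, mul_one]
  have h5 : ((1:ℝ)/(u*v)) ^ (-(1:ℝ)/2) = (u*v) ^ ((1:ℝ)/2) := by
    rw [one_div, Real.inv_rpow huvpos.le, ← Real.rpow_neg huvpos.le]
    norm_num
  rw [h5]
  -- final algebra with rpow via logarithms
  have hps : p * (1/(p*v)) = 1/v := by field_simp
  have hqt : q * (1/(q*u)) = 1/u := by field_simp
  rw [hK0, hps, hqt]
  have h1v : (0:ℝ) < 1/v := by positivity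
  have h1u : (0:ℝ) < 1/u := by positivity
  have hKa : (0:ℝ) < (1/v:ℝ) ^ (1/(2*p)) := Real.rpow_pos_of_pos h1v _
  have hKb : (0:ℝ) < (1/u:ℝ) ^ (1/(2*q)) := Real.rpow_pos_of_pos h1u _
  have hL : (0:ℝ) < ((1/v:ℝ)^(1/(2*p)) * (1/u:ℝ)^(1/(2*q))) ^ r * (u*v) ^ ((1:ℝ)/2) :=
    mul_pos (Real.rpow_pos_of_pos (mul_pos hKa hKb) _) (Real.rpow_pos_of_pos huvpos _)
  have hR : (0:ℝ) < v ^ (1/r-1/p) * u ^ (1/r-1/q) :=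
    mul_pos (Real.rpow_pos_of_pos hv0' _) (Real.rpow_pos_of_pos hu0' _)
  rw [← Real.exp_log (Real.rpow_pos_of_pos hL (1/r)),
    ← Real.exp_log (Real.rpow_pos_of_pos hR ((1:ℝ)/2))]
  congr 1
  rw [Real.log_rpow hL, Real.log_rpow hR,
    Real.log_mul (ne_of_gt (Real.rpow_pos_of_pos (mul_pos hKa hKb) r)) (ne_of_gt (Real.rpow_pos_of_pos huvpos _)),
    Real.log_rpow (mul_pos hKa hKb), Real.log_rpow huvpos,
    Real.log_mul (ne_of_gt hKa) (ne_of_gt hKb),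
    Real.log_rpow h1v, Real.log_rpow h1u,
    Real.log_mul hu0 hv0,
    Real.log_mul (ne_of_gt (Real.rpow_pos_of_pos hv0' _)) (ne_of_gt (Real.rpow_pos_of_pos hu0' _)),
    Real.log_rpow hv0', Real.log_rpow hu0',
    one_div v, one_div u, Real.log_inv, Real.log_inv]
  field_simp
  ring
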